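/- For m ≥ 2 and 1 ≤ j ≤ m-1, with c_j and d_j as above, 0 ≤ d_j/c_j ≤ d_1/c_1. -/

import Mathlib

open Finset

lemma choose_step' (n k l : ℕ) (hkl : k ≤ l) (hln : l + 1 ≤ n) :
    n.choose k * n.choose (l + 1) ≤ n.choose (k + 1) * n.choose l := by
  have h1 : n.choose (k+1) * (k+1) = n.choose k * (n - k) := Nat.choose_succ_right_eq n k
  have h2 : n.choose (l+1) * (l+1) = n.choose l * (n - l) := Nat.choose_succ_right_eq n l
  have hpos : 0 < (n - k) * (l + 1) := by
    have : k < n := by omega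
    exact Nat.mul_pos (by omega) (by omega)
  apply Nat.le_of_mul_le_mul_right _ hpos
  calc n.choose k * n.choose (l+1) * ((n-k)*(l+1))
      = (n.choose k * (n-k)) * (n.choose (l+1) * (l+1)) := by ring
    _ = (n.choose (k+1) * (k+1)) * (n.choose l * (n - l)) := by rw [h1, h2]
    _ = (n.choose (k+1) * n.choose l) * ((k+1) * (n-l)) := by ring
    _ ≤ (n.choose (k+1) * n.choose l) * ((n-k)*(l+1)) := by
        apply Nat.mul_le_mul_left
        have h3 : k + 1 ≤ l + 1 := by omega
        have h4 : n - l ≤ n - k := by omega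
        calc (k+1) * (n-l) ≤ (l+1) * (n-k) := Nat.mul_le_mul h3 h4
          _ = (n-k) * (l+1) := Nat.mul_comm _ _
    _ = n.choose (k + 1) * n.choose l * ((n-k)*(l+1)) := rfl

lemma choose_iter' (n : ℕ) : ∀ t k l, k ≤ l → l + t ≤ n →
    n.choose k * n.choose (l + t) ≤ n.choose (k + t) * n.choose l := by
  intro t
  induction t with
  | zero => intro k l _ _; simp
  | succ t ih =>
    intro k l hkl hln
    rcases eq_or_lt_of_le hkl with rfl | h
    · rw [mul_comm]
    · calc n.choose k * n.choose (l + (t+1))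
          ≤ n.choose (k+1) * n.choose (l + t) := by
            have := choose_step' n k (l+t) (by omega) (by omega)
            have e : l + (t+1) = (l + t) + 1 := by omega
            rw [e]; exact this
        _ ≤ n.choose (k + 1 + t) * n.choose l := ih (k+1) l (by omega) (by omega)
        _ = n.choose (k + (t+1)) * n.choose l := by rw [Nat.add_assoc, Nat.add_comm 1 t]

theorem stmt_6 (m : ℕ) (hm : 2 ≤ m)
    (A : ℝ) (hA : A = ∏ j ∈ Finset.Icc 1 m, ((2 * (j : ℝ) - 1) / (2 * (j : ℝ))))
    (c : ℕ → ℝ)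
    (hc : ∀ j, c j = (2 : ℝ) ^ ((2 : ℤ) - 2 * (m : ℤ)) / A *
      (Nat.choose (2 * m - 2) (m - 1 - j) : ℝ))
    (d : ℕ → ℝ) (hd : ∀ k, d k = ∑ j ∈ Finset.Icc (k + 1) (m - 1), c j) :
    ∀ j, 1 ≤ j → j ≤ m - 1 → 0 ≤ d j / c j ∧ d j / c j ≤ d 1 / c 1 := by
  have hA0 : 0 < A := by
    rw [hA]
    apply Finset.prod_pos
    intro i hi
    have h1 : 1 ≤ i := (Finset.mem_Icc.mp hi).1
    have hi1 : (1:ℝ) ≤ (i:ℝ) := by exact_mod_cast h1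
    have : (0:ℝ) < 2 * (i:ℝ) - 1 := by linarith
    have : (0:ℝ) < 2 * (i:ℝ) := by linarith
    positivity
  set K : ℝ := (2:ℝ)^((2:ℤ) - 2*(m:ℤ)) / A with hK
  have hK0 : 0 < K := by positivity
  have hcpos : ∀ i, 0 < c i := by
    intro i
    rw [hc]
    have h1 : 0 < Nat.choose (2*m-2) (m-1-i) := Nat.choose_pos (by omega)
    have h2 : (0:ℝ) < (Nat.choose (2*m-2) (m-1-i) : ℝ) := by exact_mod_cast h1
    positivity
  have hdnn : ∀ k, 0 ≤ d k := by
    intro k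
    rw [hd]
    exact Finset.sum_nonneg fun i _ => le_of_lt (hcpos i)
  intro j hj1 hjm
  refine ⟨div_nonneg (hdnn j) (le_of_lt (hcpos j)), ?_⟩
  rw [div_le_div_iff₀ (hcpos j) (hcpos 1)]
  -- key termwise inequality
  have key : ∀ i, j + 1 ≤ i → i ≤ m - 1 → c i * c 1 ≤ c (i - j + 1) * c j := by
    intro i hi1 hi2
    have nat_ineq : Nat.choose (2*m-2) (m-1-i) * Nat.choose (2*m-2) (m-1-1)
        ≤ Nat.choose (2*m-2) (m-1-(i-j+1)) * Nat.choose (2*m-2) (m-1-j) := by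
      have h := choose_iter' (2*m-2) (j-1) (m-1-i) (m-1-j) (by omega) (by omega)
      have e1 : m-1-j + (j-1) = m-1-1 := by omega
      have e2 : m-1-i + (j-1) = m-1-(i-j+1) := by omega
      rw [e1, e2] at h
      exact h
    have rineq : (Nat.choose (2*m-2) (m-1-i) : ℝ) * (Nat.choose (2*m-2) (m-1-1) : ℝ)
        ≤ (Nat.choose (2*m-2) (m-1-(i-j+1)) : ℝ) * (Nat.choose (2*m-2) (m-1-j) : ℝ) := by
      exact_mod_cast nat_ineq
    rw [hc i, hc 1, hc (i-j+1), hc j]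

    nlinarith [sq_nonneg K, hK0.le, mul_le_mul_of_nonneg_left rineq (mul_pos hK0 hK0).le]
  have step1 : d j * c 1 ≤ ∑ i ∈ Icc (j+1) (m-1), c (i - j + 1) * c j := by
    rw [hd, Finset.sum_mul]
    apply Finset.sum_le_sum
    intro i hi
    obtain ⟨h1, h2⟩ := Finset.mem_Icc.mp hi
    exact key i h1 h2
  have step2 : ∑ i ∈ Icc (j+1) (m-1), c (i - j + 1) * c j
      = ∑ i ∈ Icc 2 (m - j), c i * c j := by
    rw [show Icc (j+1) (m-1) = Icc (2 + (j-1)) ((m-j) + (j-1)) by congr 1 <;> omega]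
    rw [← Finset.map_add_right_Icc 2 (m-j) (j-1), Finset.sum_map]
    apply Finset.sum_congr rfl
    intro i hi
    obtain ⟨h1, _⟩ := Finset.mem_Icc.mp hi
    simp only [addRightEmbedding_apply]
    congr 2
    omega
  have step3 : ∑ i ∈ Icc 2 (m - j), c i * c j ≤ ∑ i ∈ Icc 2 (m-1), c i * c j := by
    apply Finset.sum_le_sum_of_subset_of_nonneg
    · exact Finset.Icc_subset_Icc_right (by omega)
    · intro i _ _
      exact le_of_lt (mul_pos (hcpos i) (hcpos j))
  have final : d 1 * c j = ∑ i ∈ Icc 2 (m-1), c i * c j := by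
    rw [hd, Finset.sum_mul]
  linarith
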